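/- Let A : {1,2}×{1,2} → 2×2 real matrices with nonnegative entries, and define the 4×4 block matrix Â with blocks [[(1−s₁)·A(1,1), s₁·A(1,2)], [s₂·A(2,1), (1−s₂)·A(2,2)]]. Then for every n ≥ 2, 𝔼[ ‖ A(I_1,I_2)·A(I_2,I_3)·…·A(I_{n−1},I_n) ‖ ] = (π ⊗ 𝟙₂)ᵀ · Â^{n−1} · 𝟙₄, where 𝟙_k = (1, …, 1) ∈ ℝ^k and π ⊗ 𝟙₂ = (π₁, π₁, π₂, π₂). -/

import Mathlib

open MeasureTheory Filter Topology

/-- The entrywise sum-of-absolute-values "norm" of a real matrix. -/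
noncomputable def matNorm {m n : Type*} [Fintype m] [Fintype n] (M : Matrix m n ℝ) : ℝ :=
  ∑ i, ∑ j, |M i j|

/-- The stationary distribution π = (s₂/(s₁+s₂), s₁/(s₁+s₂)) of the binary environment
(environment state "1" is index 0, state "2" is index 1). -/
noncomputable def envPi (s : Fin 2 → ℝ) : Fin 2 → ℝ :=
  ![s 1 / (s 0 + s 1), s 0 / (s 0 + s 1)]

/-- The transition matrix P of the binary environment. -/
noncomputable def envP (s : Fin 2 → ℝ) : Matrix (Fin 2) (Fin 2) ℝ :=
  !![1 - s 0, s 0; s 1, 1 - s 1]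

/-- Path-sum expansion for products of matrices. -/
lemma pathSum {ι : Type*} [Fintype ι] [DecidableEq ι] :
    ∀ (m : ℕ) (M : Fin m → Matrix ι ι ℝ) (u : ι → ℝ),
    (∑ w : Fin (m + 1) → ι, u (w 0) * ∏ k : Fin m, M k (w k.castSucc) (w k.succ))
      = ∑ a, ∑ b, u a * (List.ofFn M).prod a b := by
  intro m
  induction m with
  | zero =>
    intro M u
    rw [← Equiv.sum_comp (Equiv.funUnique (Fin 1) ι).symm
      (fun w => u (w 0) * ∏ k : Fin 0, M k (w k.castSucc) (w k.succ))]
    simp [Matrix.one_apply]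
  | succ m ih =>
    intro M u
    rw [← Equiv.sum_comp (Fin.consEquiv fun _ : Fin (m + 2) => ι)
      (fun w => u (w 0) * ∏ k : Fin (m + 1), M k (w k.castSucc) (w k.succ)),
      Fintype.sum_prod_type]
    have key : ∀ (a : ι) (v : Fin (m + 1) → ι),
        u ((Fin.cons a v : Fin (m + 2) → ι) 0) *
          ∏ k : Fin (m + 1), M k ((Fin.cons a v : Fin (m + 2) → ι) k.castSucc)
            ((Fin.cons a v : Fin (m + 2) → ι) k.succ)
        = u a * (M 0 a (v 0) *
            ∏ k : Fin m, M k.succ (v k.castSucc) (v k.succ)) := by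
      intro a v
      rw [Fin.prod_univ_succ]
      simp [Fin.cons_zero, Fin.cons_succ, ← Fin.succ_castSucc]
    have step : ∀ a : ι,
        (∑ v : Fin (m + 1) → ι,
          u ((Fin.consEquiv fun _ : Fin (m + 2) => ι) (a, v) 0) *
            ∏ k : Fin (m + 1), M k (((Fin.consEquiv fun _ : Fin (m + 2) => ι) (a, v)) k.castSucc)
              (((Fin.consEquiv fun _ : Fin (m + 2) => ι) (a, v)) k.succ))
        = u a * ∑ b, ∑ c, M 0 a b * (List.ofFn fun k : Fin m => M k.succ).prod b c := by
      intro a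
      have h1 : ∀ v : Fin (m + 1) → ι,
          ((Fin.consEquiv fun _ : Fin (m + 2) => ι) (a, v) : Fin (m + 2) → ι) = Fin.cons a v :=
        fun v => rfl
      simp only [h1, key]
      rw [← Finset.mul_sum, ih (fun k => M k.succ) (fun x => M 0 a x)]
    simp only [step]
    refine Finset.sum_congr rfl fun a _ => ?_
    rw [List.ofFn_succ, List.prod_cons]
    simp only [Matrix.mul_apply]
    rw [← Finset.mul_sum, Finset.sum_comm]

/-- Entries of a product of entrywise-nonnegative matrices are nonnegative. -/
lemma ofFnProd_nonneg {ι : Type*} [Fintype ι] [DecidableEq ι] :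
    ∀ (m : ℕ) (B : Fin m → Matrix ι ι ℝ), (∀ k p q, 0 ≤ B k p q) →
      ∀ p q, 0 ≤ (List.ofFn B).prod p q := by
  intro m
  induction m with
  | zero =>
    intro B _ p q
    simp only [List.ofFn_zero, List.prod_nil, Matrix.one_apply]
    split_ifs <;> norm_num
  | succ m ih =>
    intro B hB p q
    rw [List.ofFn_succ, List.prod_cons, Matrix.mul_apply]
    exact Finset.sum_nonneg fun r _ =>
      mul_nonneg (hB 0 p r) (ih _ (fun k => hB k.succ) r q)

/-- The expected entrywise norm of the product A(I₁,I₂)⋯A(I_{n−1},I_n) equals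
(π ⊗ 𝟙₂)ᵀ · Â^{n−1} · 𝟙₄, where Â is the 4×4 block matrix with blocks P_{ij}·A(i,j). -/
theorem expected_norm_eq_block_matrix_power
    {Ω : Type*} [MeasurableSpace Ω] (μ : Measure Ω) [IsProbabilityMeasure μ]
    (T : Ω → Ω) (hT : Ergodic T μ) (e : Ω → Fin 2) (he : Measurable e)
    (s : Fin 2 → ℝ) (hs : ∀ i, s i ∈ Set.Ioc (0 : ℝ) 1) (hss : s 0 * s 1 < 1)
    (henv : ∀ i j : Fin 2, μ {ω | e ω = i ∧ e (T ω) = j}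
      = ENNReal.ofReal (envPi s i * envP s i j))
    (hMarkov : ∀ n : ℕ, ∀ w : Fin (n + 1) → Fin 2,
      μ {ω | ∀ k : Fin (n + 1), e (T^[(k : ℕ)] ω) = w k}
        = ENNReal.ofReal (envPi s (w 0) * ∏ k : Fin n, envP s (w k.castSucc) (w k.succ)))
    (A : Fin 2 → Fin 2 → Matrix (Fin 2) (Fin 2) ℝ) (hA : ∀ i j y z, 0 ≤ A i j y z)
    (n : ℕ) (hn : 2 ≤ n) :
    ∫ ω, matNorm (((List.range (n - 1)).map (fun k =>
        A (e (T^[k+1] ω)) (e (T^[k+2] ω)))).prod) ∂μ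
      = ∑ a : Fin 2 × Fin 2, ∑ b : Fin 2 × Fin 2,
          envPi s a.1 *
            ((Matrix.of fun a' b' : Fin 2 × Fin 2 =>
              envP s a'.1 b'.1 * A a'.1 b'.1 a'.2 b'.2) ^ (n - 1)) a b := by
  obtain ⟨m, rfl⟩ : ∃ m, n = m + 1 := ⟨n - 1, by omega⟩
  simp only [Nat.add_sub_cancel]
  -- basic positivity facts
  have hs0 : 0 < s 0 := (hs 0).1
  have hs1 : 0 < s 1 := (hs 1).1
  have hsum : (0 : ℝ) < s 0 + s 1 := by linarith
  have hπ : ∀ i, 0 ≤ envPi s i := by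
    intro i
    fin_cases i <;> simp [envPi] <;> positivity
  have hP : ∀ i j, 0 ≤ envP s i j := by
    have h0 := (hs 0).2
    have h1 := (hs 1).2
    intro i j
    fin_cases i <;> fin_cases j <;> simp [envP] <;> linarith
  have hstat : ∀ j, envPi s 0 * envP s 0 j + envPi s 1 * envP s 1 j = envPi s j := by
    intro j
    fin_cases j <;>
      · simp [envPi, envP]
        field_simp
        ring
  -- the word events
  set E : (Fin (m + 1) → Fin 2) → Set Ω :=
    fun w => {ω | ∀ k : Fin (m + 1), e (T^[(k : ℕ) + 1] ω) = w k} with hE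
  have hTm : Measurable T := hT.toMeasurePreserving.measurable
  have hmeasV : ∀ (N : ℕ) (v : Fin N → Fin 2),
      MeasurableSet {ω | ∀ k : Fin N, e (T^[(k : ℕ)] ω) = v k} := by
    intro N v
    have : {ω | ∀ k : Fin N, e (T^[(k : ℕ)] ω) = v k}
        = ⋂ k : Fin N, (fun ω => e (T^[(k : ℕ)] ω)) ⁻¹' {v k} := by
      ext ω; simp [Set.mem_iInter]
    rw [this]
    exact MeasurableSet.iInter fun k =>
      (he.comp (hTm.iterate _)) (measurableSet_singleton _)
  have hEmeas : ∀ w, MeasurableSet (E w) := by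
    intro w
    have : E w = ⋂ k : Fin (m + 1), (fun ω => e (T^[(k : ℕ) + 1] ω)) ⁻¹' {w k} := by
      ext ω; simp [hE, Set.mem_iInter]
    rw [this]
    exact MeasurableSet.iInter fun k =>
      (he.comp (hTm.iterate _)) (measurableSet_singleton _)
  -- measure of word events
  have hEμ : ∀ w, μ (E w)
      = ENNReal.ofReal (envPi s (w 0) * ∏ k : Fin m, envP s (w k.castSucc) (w k.succ)) := by
    intro w
    have h01 : ∀ i : Fin 2, i = 0 ∨ i = 1 := by decide
    have hsplit : E w = {ω | ∀ k : Fin (m + 2), e (T^[(k : ℕ)] ω) = (Fin.cons 0 w : Fin (m + 2) → Fin 2) k}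
        ∪ {ω | ∀ k : Fin (m + 2), e (T^[(k : ℕ)] ω) = (Fin.cons 1 w : Fin (m + 2) → Fin 2) k} := by
      ext ω
      constructor
      · intro h
        rcases h01 (e ω) with h0 | h0
        · left
          intro k
          refine Fin.cases ?_ (fun j => ?_) k
          · simpa using h0
          · simpa [Fin.cons_succ, Fin.val_succ] using h j
        · right
          intro k
          refine Fin.cases ?_ (fun j => ?_) k
          · simpa using h0
          · simpa [Fin.cons_succ, Fin.val_succ] using h j
      · rintro (h | h) k
        · simpa [Fin.cons_succ, Fin.val_succ] using h k.succ
        · simpa [Fin.cons_succ, Fin.val_succ] using h k.succ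
    have hdisj : Disjoint {ω | ∀ k : Fin (m + 2), e (T^[(k : ℕ)] ω) = (Fin.cons 0 w : Fin (m + 2) → Fin 2) k}
        {ω | ∀ k : Fin (m + 2), e (T^[(k : ℕ)] ω) = (Fin.cons 1 w : Fin (m + 2) → Fin 2) k} := by
      rw [Set.disjoint_left]
      intro ω ha hb
      have a0 := ha 0
      have b0 := hb 0
      simp at a0 b0
      rw [a0] at b0
      exact absurd b0 (by decide)
    have hpeel : ∀ i : Fin 2,
        (∏ k : Fin (m + 1), envP s ((Fin.cons i w : Fin (m + 2) → Fin 2) k.castSucc)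
          ((Fin.cons i w : Fin (m + 2) → Fin 2) k.succ))
        = envP s i (w 0) * ∏ k : Fin m, envP s (w k.castSucc) (w k.succ) := by
      intro i
      rw [Fin.prod_univ_succ]
      simp [Fin.cons_zero, Fin.cons_succ, ← Fin.succ_castSucc]
    have hC : 0 ≤ ∏ k : Fin m, envP s (w k.castSucc) (w k.succ) :=
      Finset.prod_nonneg fun k _ => hP _ _
    rw [hsplit, measure_union hdisj (hmeasV _ _), hMarkov (m + 1) (Fin.cons 0 w),
      hMarkov (m + 1) (Fin.cons 1 w), hpeel 0, hpeel 1]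
    rw [show (Fin.cons (0 : Fin 2) w : Fin (m + 2) → Fin 2) 0 = 0 from rfl,
      show (Fin.cons (1 : Fin 2) w : Fin (m + 2) → Fin 2) 0 = 1 from rfl]
    rw [← ENNReal.ofReal_add
      (mul_nonneg (hπ 0) (mul_nonneg (hP 0 (w 0)) hC))
      (mul_nonneg (hπ 1) (mul_nonneg (hP 1 (w 0)) hC))]
    congr 1
    have := hstat (w 0)
    nlinarith [hstat (w 0)]
  -- value of the product on each word event
  set g : (Fin (m + 1) → Fin 2) → ℝ := fun w =>
    matNorm (List.ofFn fun k : Fin m => A (w k.castSucc) (w k.succ)).prod with hg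
  -- pointwise rewriting of the integrand
  have hptwise : ∀ ω, matNorm (((List.range m).map (fun k =>
      A (e (T^[k+1] ω)) (e (T^[k+2] ω)))).prod)
      = ∑ w : Fin (m + 1) → Fin 2, Set.indicator (E w) (fun _ => g w) ω := by
    intro ω
    set w₀ : Fin (m + 1) → Fin 2 := fun k => e (T^[(k : ℕ) + 1] ω) with hw₀
    have hsum := Finset.sum_eq_single (s := Finset.univ)
      (f := fun w => Set.indicator (E w) (fun _ => g w) ω) w₀
      (fun w _ hw => by
        apply Set.indicator_of_notMem
        intro hmemw
        exact hw (funext fun k => ((hmemw k).symm)))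
      (fun h => absurd (Finset.mem_univ w₀) h)
    rw [hsum]
    have hmem : ω ∈ E w₀ := fun k => rfl
    show matNorm _ = (E w₀).indicator (fun _ => g w₀) ω
    rw [Set.indicator_of_mem hmem]
    have hlist : ((List.range m).map (fun k => A (e (T^[k+1] ω)) (e (T^[k+2] ω))))
        = List.ofFn fun k : Fin m => A (w₀ k.castSucc) (w₀ k.succ) := by
      apply List.ext_getElem
      · simp
      · intro i h1 h2
        simp only [List.getElem_map, List.getElem_range, List.getElem_ofFn, hw₀,
          Fin.coe_castSucc, Fin.val_succ]
    rw [hg, hlist]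
  -- the integral as a finite sum
  have hint : (∫ ω, matNorm (((List.range m).map (fun k =>
      A (e (T^[k+1] ω)) (e (T^[k+2] ω)))).prod) ∂μ)
      = ∑ w : Fin (m + 1) → Fin 2, g w * (μ (E w)).toReal := by
    simp only [hptwise]
    rw [integral_finset_sum _ fun w _ => (integrable_const (g w)).indicator (hEmeas w)]
    refine Finset.sum_congr rfl fun w _ => ?_
    rw [integral_indicator_const _ (hEmeas w), smul_eq_mul, mul_comm]
    rfl
  rw [hint]
  -- evaluate g via the path-sum formula
  have hgval : ∀ w, g w = ∑ y : Fin (m + 1) → Fin 2,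
      ∏ k : Fin m, A (w k.castSucc) (w k.succ) (y k.castSucc) (y k.succ) := by
    intro w
    have h1 := pathSum m (fun k => A (w k.castSucc) (w k.succ)) (fun _ => (1 : ℝ))
    simp only [one_mul] at h1
    rw [hg]
    have habs : ∀ p q, |(List.ofFn fun k : Fin m => A (w k.castSucc) (w k.succ)).prod p q|
        = (List.ofFn fun k : Fin m => A (w k.castSucc) (w k.succ)).prod p q :=
      fun p q => abs_of_nonneg (ofFnProd_nonneg m _ (fun k p q => hA _ _ _ _) p q)
    simp only [matNorm, habs]
    exact h1.symm
  -- rewrite the RHS via the path-sum formula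
  have hpow : ((Matrix.of fun a' b' : Fin 2 × Fin 2 =>
      envP s a'.1 b'.1 * A a'.1 b'.1 a'.2 b'.2) ^ m)
      = (List.ofFn fun _ : Fin m => (Matrix.of fun a' b' : Fin 2 × Fin 2 =>
        envP s a'.1 b'.1 * A a'.1 b'.1 a'.2 b'.2)).prod := by
    rw [List.ofFn_const, List.prod_replicate]
  have hRHS := pathSum (ι := Fin 2 × Fin 2) m
    (fun _ => (Matrix.of fun a' b' : Fin 2 × Fin 2 =>
      envP s a'.1 b'.1 * A a'.1 b'.1 a'.2 b'.2))
    (fun a => envPi s a.1)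
  rw [hpow, ← hRHS]
  -- split the sum over pair-valued words
  rw [← Equiv.sum_comp (Equiv.arrowProdEquivProdArrow (Fin (m + 1)) (fun _ => Fin 2) (fun _ => Fin 2)).symm
    (fun W : Fin (m + 1) → Fin 2 × Fin 2 => envPi s ((W 0).1) *
      ∏ k : Fin m, (Matrix.of fun a' b' : Fin 2 × Fin 2 =>
        envP s a'.1 b'.1 * A a'.1 b'.1 a'.2 b'.2) (W k.castSucc) (W k.succ)),
    Fintype.sum_prod_type]
  refine Finset.sum_congr rfl fun w _ => ?_
  rw [hgval w, hEμ w, ENNReal.toReal_ofReal (mul_nonneg (hπ _)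
    (Finset.prod_nonneg fun k _ => hP _ _))]
  have happ : ∀ y : Fin (m + 1) → Fin 2,
      ((Equiv.arrowProdEquivProdArrow (Fin (m + 1)) (fun _ => Fin 2) (fun _ => Fin 2)).symm (w, y)
        : Fin (m + 1) → Fin 2 × Fin 2) = fun k => (w k, y k) := fun y => rfl
  simp only [happ, Matrix.of_apply]
  rw [Finset.sum_mul]
  refine Finset.sum_congr rfl fun y _ => ?_
  rw [Finset.prod_mul_distrib]
  ring
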